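/- Let n ≥ 2, β ∈ ℝ, and ϑ₁,…,ϑₙ distinct real numbers. Define the n×n matrices 𝒜 with first row zero, and for j ≥ 2 the j-th row having 1/(ϑ₁−ϑⱼ) in column 1, 1/(ϑⱼ−ϑ₁) in column j and zeros elsewhere; and ℬ whose first row is (−1,…,−1) and whose rows 2 through n each equal (−βϑ₁,…,−βϑₙ). Then 𝒜ℬ* is a Hermitian (self-adjoint) matrix. -/

import Mathlib

open Matrix in
theorem AB_star_hermitian (n : ℕ) (hn : 2 ≤ n) (β : ℝ) (ϑ : Fin n → ℝ)
    (hϑ : Function.Injective ϑ)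
    (A B : Matrix (Fin n) (Fin n) ℝ)
    (hA : ∀ i j, A i j =
      if (i : ℕ) = 0 then 0
      else if (j : ℕ) = 0 then 1 / (ϑ ⟨0, by omega⟩ - ϑ i)
      else if j = i then 1 / (ϑ i - ϑ ⟨0, by omega⟩) else 0)
    (hB : ∀ i j, B i j = if (i : ℕ) = 0 then -1 else -β * ϑ j) :
    (A * Bᵀ).IsHermitian := by
  set z : Fin n := ⟨0, by omega⟩ with hz
  have key : ∀ i k, (A * Bᵀ) i k = if (i : ℕ) = 0 ∨ (k : ℕ) = 0 then 0 else -β := by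
    intro i k
    rw [Matrix.mul_apply]
    by_cases hi : (i : ℕ) = 0
    · simp [hA, hi]
    · have hiz : i ≠ z := by
        intro h; apply hi; rw [h]
      have hzi : z ≠ i := Ne.symm hiz
      have hsum : ∀ j, A i j * Bᵀ j k =
          (if j = z then (1 / (ϑ z - ϑ i)) * B k z else 0) +
          (if j = i then (1 / (ϑ i - ϑ z)) * B k i else 0) := by
        intro j
        rw [hA, Matrix.transpose_apply]
        by_cases hj : (j : ℕ) = 0
        · have hjz : j = z := by ext; simpa using hj
          have hji : j ≠ i := by rw [hjz]; exact fun h => hiz h.symm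
          simp [hi, hj, hjz, hji, hzi]
          exact fun h => absurd rfl h
        · have hjz : j ≠ z := by intro h; apply hj; rw [h]
          by_cases hji : j = i
          · simp [hi, hj, hji, hjz, hzi, hiz]
          · simp [hi, hj, hji, hjz]
      rw [Finset.sum_congr rfl (fun j _ => hsum j), Finset.sum_add_distrib,
        Finset.sum_ite_eq' Finset.univ z, Finset.sum_ite_eq' Finset.univ i]
      simp only [Finset.mem_univ, if_true]
      rw [hB k z, hB k i]
      by_cases hk : (k : ℕ) = 0
      · simp only [hk, if_true, hi, if_false, or_true, eq_self_iff_true]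
        rw [show ϑ i - ϑ z = -(ϑ z - ϑ i) by ring]
        simp only [one_div, inv_neg]
        ring
      · have hzk : ϑ z - ϑ i ≠ 0 := by
          intro h
          exact hiz (hϑ (by linarith)).symm
        have hik : ϑ i - ϑ z ≠ 0 := fun h => hzk (by linarith)
        simp only [hk, hi, if_false, or_self]
        field_simp
        ring
  ext i k
  rw [Matrix.conjTranspose_apply, key, key]
  simp [or_comm]
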